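/- Let p be prime, m ∈ ℕ, and define e*(k) := max{x ∈ ℕ : p^x ∣ p^k·k!} for k < s*(p^m) and e*(s*(p^m)) := m, where s*(p^m) := min{x ∈ ℕ : p^m ∣ p^x·x!}. Then for every k ∈ {1, ..., s*(p^m)}, the polynomial b*_k(x) := p^{m−e*(k)} · ∏_{j=1}^{k}(x + jp) satisfies b*_k(jp) ≡ 0 (mod p^m) for all integers j. -/
import Mathlib


/-- `s*(p^m) = min{x ≥ 1 : p^m ∣ p^x x!}`. -/
noncomputable def sStar (p m : ℕ) : ℕ := sInf {x : ℕ | 0 < x ∧ p ^ m ∣ p ^ x * Nat.factorial x}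

/-- `e*(k) = max{x : p^x ∣ p^k k!}` for `k < s*(p^m)`, and `e*(s*(p^m)) = m`. -/
noncomputable def eStar (p m k : ℕ) : ℕ :=
  if k = sStar p m then m else (p ^ k * Nat.factorial k).factorization p

lemma prod_eq_ascPochhammer (k : ℕ) (j : ℤ) :
    ∏ l ∈ Finset.Icc 1 k, (j + l) = (ascPochhammer ℤ k).eval (j + 1) := by
  induction k with
  | zero => simp
  | succ n ih =>
    rw [Finset.prod_Icc_succ_top (by omega), ih, ascPochhammer_succ_eval]
    push_cast
    ring

lemma factorial_dvd_prod (k : ℕ) (j : ℤ) :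
    (k.factorial : ℤ) ∣ ∏ l ∈ Finset.Icc 1 k, (j + l) := by
  rw [prod_eq_ascPochhammer]
  refine ⟨Ring.multichoose (j + 1) k, ?_⟩
  rw [← Polynomial.ascPochhammer_smeval_eq_eval,
    ← Ring.factorial_nsmul_multichoose_eq_ascPochhammer]
  simp [nsmul_eq_mul]

/-- For every `k ∈ {1, …, s*(p^m)}`, the polynomial
`b*_k(x) = p^{m - e*(k)} ∏_{j=1}^k (x + jp)` vanishes modulo `p^m` at every
multiple of `p`. -/
theorem basic_polynomial_in_Ipm (p : ℕ) (hp : p.Prime) (m : ℕ) (hm : 0 < m)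
    (k : ℕ) (hk : 1 ≤ k) (hks : k ≤ sStar p m) (j : ℤ) :
    ((p : ℤ) ^ m) ∣ (p : ℤ) ^ (m - eStar p m k) *
      ∏ l ∈ Finset.Icc 1 k, (j * p + l * p) := by
  have hprod : ∏ l ∈ Finset.Icc 1 k, (j * (p : ℤ) + l * p)
      = (p : ℤ) ^ k * ∏ l ∈ Finset.Icc 1 k, (j + l) := by
    have : ∀ l ∈ Finset.Icc 1 k, (j * (p : ℤ) + l * p) = (p : ℤ) * (j + l) := by
      intro l _; ring
    rw [Finset.prod_congr rfl this, Finset.prod_mul_distrib, Finset.prod_const,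
      Nat.card_Icc]
    simp
  -- k! divides the inner product
  obtain ⟨t, ht⟩ := factorial_dvd_prod k j
  rw [hprod, ht]
  -- target : p^m ∣ p^(m - e) * (p^k * (k! * t))
  have key : ((p : ℤ) ^ m) ∣ (p : ℤ) ^ (m - eStar p m k) * ((p : ℤ) ^ k * (k.factorial : ℤ)) := by
    by_cases hke : k = sStar p m
    · -- e = m, and p^m ∣ p^k * k!
      have hne : {x : ℕ | 0 < x ∧ p ^ m ∣ p ^ x * Nat.factorial x}.Nonempty :=
        ⟨m, hm, dvd_mul_right _ _⟩
      have hmem := Nat.sInf_mem hne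
      have hdvd : p ^ m ∣ p ^ k * Nat.factorial k := by
        rw [hke]; exact hmem.2
      have : ((p : ℤ) ^ m) ∣ ((p : ℤ) ^ k * (k.factorial : ℤ)) := by
        exact_mod_cast Int.natCast_dvd_natCast.mpr hdvd
      exact this.mul_left _
    · -- e = valuation of p^k k!
      have hE : eStar p m k = (p ^ k * Nat.factorial k).factorization p := by
        simp [eStar, hke]
      have hpe : p ^ eStar p m k ∣ p ^ k * Nat.factorial k := by
        rw [hE]; exact Nat.ordProj_dvd _ _
      have hpe' : ((p : ℤ)) ^ eStar p m k ∣ ((p : ℤ) ^ k * (k.factorial : ℤ)) := by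
        exact_mod_cast Int.natCast_dvd_natCast.mpr hpe
      calc ((p : ℤ) ^ m) ∣ (p : ℤ) ^ (m - eStar p m k) * (p : ℤ) ^ eStar p m k := by
            rw [← pow_add]; exact pow_dvd_pow _ le_tsub_add
        _ ∣ _ := mul_dvd_mul_left _ hpe'
  calc ((p : ℤ) ^ m) ∣ (p : ℤ) ^ (m - eStar p m k) * ((p : ℤ) ^ k * (k.factorial : ℤ)) := key
    _ ∣ _ := ⟨t, by ring⟩
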